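/- There exist constants C₆ > 0 and C₇ > 0 depending only on σ and β (independent of ε and N) such that, under Assumption 2.2, the first mesh step size of the mesh generated by ψ satisfies C₆·ε·N⁻¹ ≤ h₀ ≤ C₇·ε·N⁻¹. -/

import Mathlib

/-- The Bakhvalov-type mesh generating function of Roos (2006). -/
noncomputable def psi (β σ ε : ℝ) (t : ℝ) : ℝ :=
  if t ≤ 1/4 then -(σ * ε / β) * Real.log (1 - 4 * (1 - ε) * t)
  else if t < 3/4 then
    (2 * (1 + (σ * ε / β) * Real.log ε)) * (t - 1/4)
      + ((2 * σ * ε / β) * Real.log ε) * (t - 3/4)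
  else 1 + (σ * ε / β) * Real.log (1 - 4 * (1 - ε) * (1 - t))

/-- Mesh points `x_i = ψ(i/N)`. -/
noncomputable def meshX (β σ ε : ℝ) (N i : ℕ) : ℝ := psi β σ ε ((i : ℝ) / (N : ℝ))

/-- Mesh step sizes `h_i = x_{i+1} - x_i`. -/
noncomputable def meshH (β σ ε : ℝ) (N i : ℕ) : ℝ :=
  meshX β σ ε N (i + 1) - meshX β σ ε N i

theorem stmt_5 (β σ : ℝ) (hβ : 0 < β) (hσ : 0 < σ) :
    ∃ C₆ C₇ : ℝ, 0 < C₆ ∧ 0 < C₇ ∧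
      ∀ (ε : ℝ) (N : ℕ), 0 < ε → ε < 1 → 4 ∣ N →
        max 8 (2 * Real.log (σ / β)) ≤ (N : ℝ) →
        ε ≤ min (β / (4 * σ)) 1 * (N : ℝ)⁻¹ →
        C₆ * ε * (N : ℝ)⁻¹ ≤ meshH β σ ε N 0 ∧
        meshH β σ ε N 0 ≤ C₇ * ε * (N : ℝ)⁻¹ := by
  refine ⟨2 * σ / β, 8 * σ / β, by positivity, by positivity, ?_⟩
  intro ε N hε hε1 _ hN hεN
  have hN8 : (8 : ℝ) ≤ (N : ℝ) := le_trans (le_max_left _ _) hN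
  have hN0 : (0 : ℝ) < (N : ℝ) := by linarith
  have hεN1 : ε ≤ (N : ℝ)⁻¹ := by
    have := min_le_right (β / (4 * σ)) 1
    calc ε ≤ min (β / (4 * σ)) 1 * (N : ℝ)⁻¹ := hεN
      _ ≤ 1 * (N : ℝ)⁻¹ := by
        apply mul_le_mul_of_nonneg_right this (by positivity)
      _ = (N : ℝ)⁻¹ := one_mul _
  have hinv8 : (N : ℝ)⁻¹ ≤ 1 / 8 := by
    rw [inv_eq_one_div]
    exact one_div_le_one_div_of_le (by norm_num) hN8
  have hε8 : ε ≤ 1 / 8 := le_trans hεN1 hinv8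
  -- the mesh point value
  set u : ℝ := 4 * (1 - ε) / (N : ℝ) with hu
  have hu0 : 0 < u := by
    apply div_pos (by linarith) hN0
  have hu12 : u ≤ 1 / 2 := by
    rw [hu, div_le_iff₀ hN0]
    nlinarith
  have hu2 : 2 / (N : ℝ) ≤ u := by
    rw [hu, div_le_div_iff_of_pos_right hN0]
    linarith
  have h1u : (0 : ℝ) < 1 - u := by linarith
  have hH : meshH β σ ε N 0 = -(σ * ε / β) * Real.log (1 - u) := by
    have h0 : ((0 : ℕ) : ℝ) / (N : ℝ) = 0 := by norm_num
    have h1 : ((0 + 1 : ℕ) : ℝ) / (N : ℝ) = ((N : ℝ))⁻¹ := by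
      norm_num
    have hle : ((N : ℝ))⁻¹ ≤ 1 / 4 := le_trans hinv8 (by norm_num)
    simp only [meshH, meshX, psi, h0, h1, if_pos hle, if_pos (by norm_num : (0:ℝ) ≤ 1/4)]
    have : 1 - 4 * (1 - ε) * ((N : ℝ))⁻¹ = 1 - u := by
      rw [hu]; field_simp
    rw [this]
    simp
  -- bounds on -log(1-u)
  have hlog_low : u ≤ -Real.log (1 - u) := by
    have := Real.log_le_sub_one_of_pos h1u
    linarith
  have hlog_up : -Real.log (1 - u) ≤ 2 * u := by
    have h2 : Real.log (1 - u)⁻¹ ≤ (1 - u)⁻¹ - 1 :=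
      Real.log_le_sub_one_of_pos (by positivity)
    rw [Real.log_inv] at h2
    have h3 : (1 - u)⁻¹ - 1 = u / (1 - u) := by field_simp; ring
    have h4 : u / (1 - u) ≤ 2 * u := by
      rw [div_le_iff₀ h1u]
      nlinarith
    linarith
  have hcoef : 0 < σ * ε / β := by positivity
  constructor
  · rw [hH]
    have : σ * ε / β * u ≤ σ * ε / β * (-Real.log (1 - u)) :=
      mul_le_mul_of_nonneg_left hlog_low hcoef.le
    calc 2 * σ / β * ε * (N : ℝ)⁻¹ = σ * ε / β * (2 / (N : ℝ)) := by
          field_simp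
      _ ≤ σ * ε / β * u := mul_le_mul_of_nonneg_left hu2 hcoef.le
      _ ≤ σ * ε / β * (-Real.log (1 - u)) := this
      _ = -(σ * ε / β) * Real.log (1 - u) := by ring
  · rw [hH]
    have hu4 : u ≤ 4 / (N : ℝ) := by
      rw [hu, div_le_div_iff_of_pos_right hN0]
      nlinarith
    calc -(σ * ε / β) * Real.log (1 - u) = σ * ε / β * (-Real.log (1 - u)) := by ring
      _ ≤ σ * ε / β * (2 * u) := mul_le_mul_of_nonneg_left hlog_up hcoef.le
      _ ≤ σ * ε / β * (2 * (4 / (N : ℝ))) := by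
          apply mul_le_mul_of_nonneg_left _ hcoef.le
          linarith
      _ = 8 * σ / β * ε * (N : ℝ)⁻¹ := by field_simp; ring
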